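/- Let (X, Σ, λ) be a measure space and let f, g : X → ℂ be integrable. Then f is Birkhoff-James orthogonal to g in L¹(X, λ) (i.e., ∫ |f + c·g| dλ ≥ ∫ |f| dλ for every c ∈ ℂ) if and only if |∫_X conj(sgn(f(x)))·g(x) dλ(x)| ≤ ∫_{ {x : f(x) = 0} } |g(x)| dλ(x). -/

import Mathlib

open MeasureTheory Filter Topology

/-- The sign function on `ℂ`: `sgn z = z / |z|` for `z ≠ 0` and `sgn 0 = 0`. -/
noncomputable def csgn (z : ℂ) : ℂ := if z = 0 then 0 else z / ((‖z‖ : ℝ) : ℂ)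

lemma abs_csgn_of_ne {z : ℂ} (h : z ≠ 0) : ‖csgn z‖ = 1 := by
  unfold csgn
  rw [if_neg h, norm_div, Complex.norm_real, Real.norm_eq_abs, abs_of_nonneg (norm_nonneg z),
    div_self (norm_ne_zero_iff.mpr h)]

lemma abs_csgn_le_one (z : ℂ) : ‖csgn z‖ ≤ 1 := by
  by_cases h : z = 0
  · simp [h, csgn]
  · rw [abs_csgn_of_ne h]

lemma conj_csgn_mul_self (z : ℂ) : (starRingEnd ℂ) (csgn z) * z = (‖z‖ : ℂ) := by
  unfold csgn
  split
  · simp_all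
  · rename_i h
    rw [map_div₀, Complex.conj_ofReal, div_mul_eq_mul_div, ← Complex.normSq_eq_conj_mul_self,
      Complex.normSq_eq_norm_sq]
    push_cast
    rw [sq, mul_div_assoc, div_self, mul_one]
    exact_mod_cast norm_ne_zero_iff.mpr h

lemma measurable_csgn : Measurable csgn := by
  unfold csgn
  exact Measurable.ite (measurableSet_eq_fun measurable_id measurable_const)
    measurable_const
    (measurable_id.div (Complex.measurable_ofReal.comp continuous_norm.measurable))

lemma hasDerivAt_abs_lin (a b : ℂ) (ha : a ≠ 0) :
    HasDerivAt (fun t : ℝ => ‖a + (t : ℂ) * b‖)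
      (((starRingEnd ℂ) (csgn a) * b).re) 0 := by
  have hN : (fun t : ℝ => Complex.normSq (a + (t : ℂ) * b)) =
      fun t : ℝ => Complex.normSq a + 2 * (a * (starRingEnd ℂ) b).re * t
        + Complex.normSq b * t ^ 2 := by
    funext t
    rw [Complex.normSq_add]
    have h1 : a * (starRingEnd ℂ) ((t : ℂ) * b) = (t : ℂ) * (a * (starRingEnd ℂ) b) := by
      rw [map_mul, Complex.conj_ofReal]; ring
    rw [h1, Complex.re_ofReal_mul, Complex.normSq_mul, Complex.normSq_ofReal]
    ring
  have hderivN : HasDerivAt (fun t : ℝ => Complex.normSq (a + (t : ℂ) * b))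
      (2 * (a * (starRingEnd ℂ) b).re) 0 := by
    rw [hN]
    have h1 := (hasDerivAt_id (0:ℝ)).const_mul (2 * (a * (starRingEnd ℂ) b).re)
    have h2 := (hasDerivAt_pow 2 (0:ℝ)).const_mul (Complex.normSq b)
    have := ((hasDerivAt_const (0:ℝ) (Complex.normSq a)).add h1).add h2
    exact this.congr_deriv (by simp)
  have h0 : Complex.normSq (a + (0 : ℝ) * b) ≠ 0 := by
    simpa using (Complex.normSq_pos.2 ha).ne'
  have hsq := hderivN.sqrt h0
  have habs : (fun t : ℝ => Real.sqrt (Complex.normSq (a + (t : ℂ) * b)))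
      = fun t : ℝ => ‖a + (t : ℂ) * b‖ := by
    funext t; rw [Complex.norm_def]
  rw [habs] at hsq
  convert hsq using 1
  have h2 : Complex.normSq (a + (0 : ℝ) * b) = Complex.normSq a := by simp
  rw [h2, ← Complex.norm_def]
  unfold csgn
  rw [if_neg ha, map_div₀, Complex.conj_ofReal, div_mul_eq_mul_div, Complex.div_ofReal_re]
  have : ((starRingEnd ℂ) a * b).re = (a * (starRingEnd ℂ) b).re := by
    rw [← Complex.conj_re ((starRingEnd ℂ) a * b), map_mul, Complex.conj_conj]
  rw [this]
  field_simp

section core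
variable {X : Type*} [MeasurableSpace X] {μ : Measure X} {f g : X → ℂ}

lemma sgn_mul_integrable (hfm : Measurable f) (hg : Integrable g μ) (w : ℂ) :
    Integrable (fun x => (starRingEnd ℂ) (csgn (f x)) * (w * g x)) μ := by
  apply Integrable.mono (hg.const_mul w)
  · exact ((continuous_star.measurable.comp (measurable_csgn.comp hfm)).aestronglyMeasurable.mul
      (hg.aestronglyMeasurable.const_mul w))
  · filter_upwards with x
    rw [norm_mul]
    apply mul_le_of_le_one_left (norm_nonneg _)
    simpa [Complex.norm_conj] using abs_csgn_le_one (f x)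

lemma sgn_mul_integral (hfm : Measurable f) (hg : Integrable g μ) (w : ℂ) :
    ∫ x, (starRingEnd ℂ) (csgn (f x)) * (w * g x) ∂μ =
      w * ∫ x, (starRingEnd ℂ) (csgn (f x)) * g x ∂μ := by
  rw [← integral_const_mul]
  congr 1; funext x; ring

theorem key (hfm : Measurable f) (hf : Integrable f μ) (hg : Integrable g μ) :
    (∀ c : ℂ, ∫ x, ‖f x‖ ∂μ ≤ ∫ x, ‖f x + c * g x‖ ∂μ) ↔
      ‖∫ x, (starRingEnd ℂ) (csgn (f x)) * g x ∂μ‖ ≤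
        ∫ x in {x : X | f x = 0}, ‖g x‖ ∂μ := by
  set Z : Set X := {x : X | f x = 0} with hZdef
  have hZ : MeasurableSet Z := hfm (measurableSet_singleton 0)
  set I : ℂ := ∫ x, (starRingEnd ℂ) (csgn (f x)) * g x ∂μ with hIdef
  have habsf : Integrable (fun x => ‖f x‖) μ := by
    simpa using hf.norm
  have hind : Integrable (Z.indicator fun x => ‖g x‖) μ := by
    have := hg.norm.indicator hZ
    simpa using this
  have hindint : ∫ x, Z.indicator (fun y => ‖g y‖) x ∂μ
      = ∫ x in Z, ‖g x‖ ∂μ := integral_indicator hZ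
  constructor
  · -- forward
    intro H
    by_cases hI0 : I = 0
    · rw [hI0, norm_zero]
      exact integral_nonneg fun x => norm_nonneg _
    · set w : ℂ := (starRingEnd ℂ) (csgn I) with hwdef
      have hw1 : ‖w‖ = 1 := by
        rw [hwdef, Complex.norm_conj]; exact abs_csgn_of_ne hI0
      have hwI : w * I = (‖I‖ : ℂ) := conj_csgn_mul_self I
      set φ : X → ℝ := fun x => ((starRingEnd ℂ) (csgn (f x)) * (-(w * g x))).re
        + Z.indicator (fun y => ‖g y‖) x with hφdef
      set F : ℝ → X → ℝ := fun t x =>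
        (‖f x + (t : ℂ) * (-(w * g x))‖ - ‖f x‖) / t with hFdef
      have habsg : Integrable (fun x => ‖g x‖) μ := by
        simpa using hg.norm
      have hFtend : Tendsto (fun t => ∫ x, F t x ∂μ) (𝓝[>] (0:ℝ)) (𝓝 (∫ x, φ x ∂μ)) := by
        apply tendsto_integral_filter_of_dominated_convergence (fun x => ‖g x‖)
        · filter_upwards with t
          have h1 : AEStronglyMeasurable (fun x => f x + (t:ℂ) * (-(w * g x))) μ :=
            hf.aestronglyMeasurable.add
              (((hg.aestronglyMeasurable.const_mul w).neg).const_mul _)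
          have h2 := (continuous_norm.comp_aestronglyMeasurable h1).sub
            (continuous_norm.comp_aestronglyMeasurable hf.aestronglyMeasurable)
          have h3 : F t = fun x =>
              (‖f x + (t:ℂ) * (-(w * g x))‖ - ‖f x‖) * t⁻¹ := by
            funext x; simp only [hFdef]; rw [div_eq_mul_inv]
          rw [h3]
          exact h2.mul aestronglyMeasurable_const
        · filter_upwards [self_mem_nhdsWithin] with t ht
          filter_upwards with x
          have ht0 : (0:ℝ) < t := ht
          rw [Real.norm_eq_abs, abs_div, abs_of_pos ht0, div_le_iff₀ ht0]
          have h2 : |‖f x + (t:ℂ) * (-(w * g x))‖ - ‖f x‖|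
              ≤ ‖(t:ℂ) * (-(w * g x))‖ := by
            simpa using abs_norm_sub_norm_le (f x + (t:ℂ)*(-(w*g x))) (f x)
          refine h2.trans ?_
          rw [norm_mul, norm_neg, norm_mul, Complex.norm_real, Real.norm_eq_abs, abs_of_pos ht0,
            hw1, one_mul, mul_comm]
        · exact habsg
        · filter_upwards with x
          by_cases hx : f x = 0
          · have hxZ : x ∈ Z := hx
            have hφx : φ x = ‖g x‖ := by
              simp [hφdef, hx, csgn, Set.indicator_of_mem hxZ]
            rw [hφx]
            apply Tendsto.congr' _ tendsto_const_nhds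
            filter_upwards [self_mem_nhdsWithin] with t ht
            have ht0 : (0:ℝ) < t := ht
            have : F t x = (t * ‖g x‖) / t := by
              simp only [hFdef]
              simp only [hx, zero_add, norm_zero, sub_zero, norm_mul, norm_neg,
                Complex.norm_real, Real.norm_eq_abs, abs_of_pos ht0, hw1, one_mul]
            rw [this, mul_div_cancel_left₀ _ ht0.ne']
          · have hxZ : x ∉ Z := hx
            have hφx : φ x = ((starRingEnd ℂ) (csgn (f x)) * (-(w * g x))).re := by
              simp [hφdef, Set.indicator_of_notMem hxZ]
            rw [hφx]
            have hd := hasDerivAt_abs_lin (f x) (-(w * g x)) hx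
            rw [hasDerivAt_iff_tendsto_slope] at hd
            have hd2 := hd.mono_left
              (nhdsWithin_mono (0:ℝ) fun y hy => ne_of_gt hy)
            apply hd2.congr
            intro t
            rw [slope_def_field]
            simp only [hFdef]
            norm_num
      have hkey : ∀ t ∈ Set.Ioi (0:ℝ), 0 ≤ ∫ x, F t x ∂μ := by
        intro t ht
        have hc := H (-((t:ℂ) * w))
        have hA' : Integrable (fun x => ‖f x + (-((t:ℂ)*w)) * g x‖) μ := by
          simpa using (hf.add (hg.const_mul (-((t:ℂ)*w)))).norm
        have hFeq : (fun x => F t x) = fun x =>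
            (‖f x + (-((t:ℂ)*w)) * g x‖ - ‖f x‖) / t := by
          funext x
          simp only [hFdef]
          have : f x + (t:ℂ) * (-(w * g x)) = f x + (-((t:ℂ)*w)) * g x := by ring
          rw [this]
        rw [hFeq, integral_div, integral_sub hA' habsf]
        exact div_nonneg (sub_nonneg.2 hc) (le_of_lt ht)
      have h0 : 0 ≤ ∫ x, φ x ∂μ :=
        ge_of_tendsto hFtend (eventually_of_mem self_mem_nhdsWithin hkey)
      have hre : Integrable (fun x => ((starRingEnd ℂ) (csgn (f x)) * (-(w * g x))).re) μ := by
        have := (sgn_mul_integrable hfm hg (-w)).re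
        simpa [neg_mul] using this
      have hφint : ∫ x, φ x ∂μ = -(‖I‖) + ∫ x in Z, ‖g x‖ ∂μ := by
        rw [hφdef, integral_add hre hind, hindint]
        congr 1
        have h5 := integral_re (𝕜 := ℂ) (sgn_mul_integrable hfm hg (-w))
        simp only [RCLike.re_to_complex] at h5
        have h6 : (fun x => ((starRingEnd ℂ) (csgn (f x)) * (-(w * g x))).re)
            = fun x => ((starRingEnd ℂ) (csgn (f x)) * ((-w) * g x)).re := by
          funext x; rw [neg_mul]
        rw [h6, h5, sgn_mul_integral hfm hg (-w), ← hIdef, neg_mul, hwI]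
        simp
      rw [hφint] at h0
      linarith
  · -- backward
    intro hI c
    have hA : Integrable (fun x => ‖f x + c * g x‖) μ := by
      simpa using (hf.add (hg.const_mul c)).norm
    have hB : Integrable (fun x => (starRingEnd ℂ) (csgn (f x)) * (c * g x)) μ :=
      sgn_mul_integrable hfm hg c
    have hBre : Integrable (fun x => ((starRingEnd ℂ) (csgn (f x)) * (c * g x)).re) μ := by
      simpa using hB.re
    have hpt : ∀ x, ‖f x‖ ≤ ‖f x + c * g x‖
        - ((starRingEnd ℂ) (csgn (f x)) * (c * g x)).re
        - ‖c‖ * Z.indicator (fun y => ‖g y‖) x := by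
      intro x
      by_cases hx : f x = 0
      · have hxZ : x ∈ Z := hx
        simp [Set.indicator_of_mem hxZ, hx, csgn, map_mul]
      · have hxZ : x ∉ Z := hx
        rw [Set.indicator_of_notMem hxZ, mul_zero, sub_zero]
        have h1 : ((starRingEnd ℂ) (csgn (f x)) * (f x + c * g x)).re
            = ‖f x‖ + ((starRingEnd ℂ) (csgn (f x)) * (c * g x)).re := by
          rw [mul_add, conj_csgn_mul_self, Complex.add_re, Complex.ofReal_re]
        have h2 : ((starRingEnd ℂ) (csgn (f x)) * (f x + c * g x)).re
            ≤ ‖f x + c * g x‖ := by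
          refine (Complex.re_le_norm _).trans ?_
          rw [norm_mul, Complex.norm_conj]
          exact mul_le_of_le_one_left (norm_nonneg _) (abs_csgn_le_one _)
        linarith
    have hRHSint : Integrable (fun x => ‖f x + c * g x‖
        - ((starRingEnd ℂ) (csgn (f x)) * (c * g x)).re
        - ‖c‖ * Z.indicator (fun y => ‖g y‖) x) μ := by
      exact (hA.sub hBre).sub (hind.const_mul (‖c‖))
    have hAB : Integrable (fun x => ‖f x + c * g x‖
        - ((starRingEnd ℂ) (csgn (f x)) * (c * g x)).re) μ := by exact hA.sub hBre
    have hCint : Integrable (fun x =>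
        ‖c‖ * Z.indicator (fun y => ‖g y‖) x) μ := by
      exact hind.const_mul (‖c‖)
    have hmono := integral_mono habsf hRHSint hpt
    rw [integral_sub hAB hCint, integral_sub hA hBre, integral_const_mul, hindint] at hmono
    have hBint : ∫ x, ((starRingEnd ℂ) (csgn (f x)) * (c * g x)).re ∂μ = (c * I).re := by
      have := integral_re (𝕜 := ℂ) hB
      simp only [RCLike.re_to_complex] at this
      rw [this, sgn_mul_integral hfm hg c]
    rw [hBint] at hmono
    have h3 : -(c * I).re ≤ ‖c‖ * ∫ x in Z, ‖g x‖ ∂μ := by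
      have h4 : -(c * I).re ≤ ‖c * I‖ := by
        simpa using Complex.re_le_norm (-(c * I))
      rw [norm_mul] at h4
      exact h4.trans (mul_le_mul_of_nonneg_left hI (norm_nonneg c))
    linarith
end core

/-- **Birkhoff-James orthogonality in `L¹`.** For integrable `f, g : X → ℂ`,
`f ⊥_B g` in `L¹(X, μ)` iff
`|∫ conj (sgn (f x)) * g x dμ| ≤ ∫_{f = 0} |g| dμ`. -/
theorem birkhoff_orthogonality_L1 (X : Type*) [MeasurableSpace X] (μ : Measure X)
    (f g : X → ℂ) (hf : Integrable f μ) (hg : Integrable g μ) :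
    (∀ c : ℂ, ∫ x, ‖f x‖ ∂μ ≤ ∫ x, ‖f x + c * g x‖ ∂μ) ↔
      ‖∫ x, (starRingEnd ℂ) (csgn (f x)) * g x ∂μ‖ ≤
        ∫ x in {x : X | f x = 0}, ‖g x‖ ∂μ := by
  obtain ⟨f', hf'm, hff'⟩ : ∃ f', StronglyMeasurable f' ∧ f =ᵐ[μ] f' :=
    ⟨hf.aestronglyMeasurable.mk f, hf.aestronglyMeasurable.stronglyMeasurable_mk,
      hf.aestronglyMeasurable.ae_eq_mk⟩
  have hf' : Integrable f' μ := hf.congr hff'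
  have h1 : ∀ c : ℂ, (∫ x, ‖f x + c * g x‖ ∂μ)
      = ∫ x, ‖f' x + c * g x‖ ∂μ := fun c =>
    integral_congr_ae (hff'.mono fun x hx => by simp only [hx])
  have h2 : (∫ x, ‖f x‖ ∂μ) = ∫ x, ‖f' x‖ ∂μ :=
    integral_congr_ae (hff'.mono fun x hx => by simp only [hx])
  have h3 : (∫ x, (starRingEnd ℂ) (csgn (f x)) * g x ∂μ)
      = ∫ x, (starRingEnd ℂ) (csgn (f' x)) * g x ∂μ :=
    integral_congr_ae (hff'.mono fun x hx => by simp only [hx])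
  have h4 : (∫ x in {x : X | f x = 0}, ‖g x‖ ∂μ)
      = ∫ x in {x : X | f' x = 0}, ‖g x‖ ∂μ :=
    setIntegral_congr_set (by
      filter_upwards [hff'] with x hx
      change (f x = 0) = (f' x = 0)
      rw [hx])
  simp_rw [h1, h2, h3, h4]
  exact key hf'm.measurable hf' hg
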